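/- Let R > 0, let n, k ≥ 1 be integers, and let g : B(0,R) ⊆ ℝⁿ → ℂ be continuous with Re(g(x)) ≥ 0 for all x, with equality only at x = 0 where g(0) = 0. If the k-th power g^k is Lipschitz on B(0,R) with constant C₁ (i.e., |g(y)^k − g(x)^k| ≤ C₁‖y − x‖ for all x, y), then g is Hölder continuous with exponent 1/k on B(0,R): there is C₂ such that |g(y) − g(x)| ≤ C₂‖y − x‖^{1/k} for all x, y ∈ B(0,R). Moreover one may take C₂ = 2k·C₁^{1/k}. -/

import Mathlib

open Metric Set

private lemma aux_root {k : ℕ} (hk : k ≠ 0) {a b c : ℝ} (hb : 0 ≤ b) (hc : 0 ≤ c)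
    (hba : b ≤ a) (h : a ^ k - b ^ k ≤ c ^ k) : a - b ≤ c := by
  have h1 : (a - b) ^ k + b ^ k ≤ a ^ k := by
    simpa using pow_add_pow_le (sub_nonneg.2 hba) hb hk
  exact le_of_pow_le_pow_left₀ hk hc (by linarith)

private lemma root_le {k : ℕ} (hk : k ≠ 0) {a b c : ℝ} (ha : 0 ≤ a) (hb : 0 ≤ b)
    (hc : 0 ≤ c) (h : |a ^ k - b ^ k| ≤ c ^ k) : |a - b| ≤ c := by
  rcases abs_le.1 h with ⟨h1, h2⟩
  rcases le_total b a with hba | hab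
  · rw [abs_of_nonneg (sub_nonneg.2 hba)]
    exact aux_root hk hb hc hba h2
  · rw [abs_of_nonpos (sub_nonpos.2 hab), neg_sub]
    exact aux_root hk ha hc hab (by linarith)

private lemma exp_I_sub_one_le (x : ℝ) :
    ‖Complex.exp (x * Complex.I) - 1‖ ≤ |x| := by
  have hcos : 1 - x ^ 2 / 2 ≤ Real.cos x := Real.one_sub_sq_div_two_le_cos
  have hsq : ‖Complex.exp (x * Complex.I) - 1‖ ^ 2 ≤ |x| ^ 2 := by
    rw [Complex.sq_norm, Complex.normSq_apply]
    simp only [Complex.sub_re, Complex.sub_im, Complex.one_re, Complex.one_im,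
      Complex.exp_ofReal_mul_I_re, Complex.exp_ofReal_mul_I_im, sq_abs]
    nlinarith [Real.sin_sq_add_cos_sq x]
  exact le_of_pow_le_pow_left₀ two_ne_zero (abs_nonneg x) hsq

private lemma chord_le (a b : ℝ) :
    ‖Complex.exp (a * Complex.I) - Complex.exp (b * Complex.I)‖ ≤ |a - b| := by
  have h1 : Complex.exp (↑a * Complex.I) - Complex.exp (↑b * Complex.I)
      = Complex.exp (↑b * Complex.I) * (Complex.exp (↑(a - b) * Complex.I) - 1) := by
    rw [mul_sub, ← Complex.exp_add, mul_one]
    push_cast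
    ring_nf
  rw [h1, norm_mul, Complex.norm_exp_ofReal_mul_I, one_mul]
  exact exp_I_sub_one_le (a - b)


private lemma exp_shift (c a : ℝ) (z : ℂ) :
    Complex.exp ((c:ℂ) * Complex.I) * (z * Complex.exp ((a:ℂ) * Complex.I))
      = z * Complex.exp (((a + c : ℝ) : ℂ) * Complex.I) := by
  rw [Complex.ofReal_add, add_mul, Complex.exp_add]
  ring

private lemma conj_coe_exp (r a : ℝ) :
    (starRingEnd ℂ) ((r:ℂ) * Complex.exp ((a:ℂ) * Complex.I))
      = (r:ℂ) * Complex.exp (((-a : ℝ) : ℂ) * Complex.I) := by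
  rw [map_mul, Complex.conj_ofReal, ← Complex.exp_conj]
  congr 1
  rw [map_mul, Complex.conj_ofReal, Complex.conj_I]
  push_cast
  ring

private lemma key {k : ℕ} (hk : 2 ≤ k) {D : ℝ} (hD : 0 < D) (φ : ℝ → ℂ)
    (hφ : ContinuousOn φ (Set.Icc 0 1))
    (hH : ∀ t ∈ Set.Icc (0:ℝ) 1, φ t ≠ 0 → 0 < (φ t).re)
    (hl : ∀ t ∈ Set.Icc (0:ℝ) 1, ‖φ t ^ k - φ 0 ^ k‖ ≤ D ^ k) :
    ‖φ 1 - φ 0‖ ≤ 2 * k * D := by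
  have hk0 : k ≠ 0 := by omega
  have hkR : (2:ℝ) ≤ (k:ℝ) := by exact_mod_cast hk
  have h01 : (0:ℝ) ∈ Set.Icc (0:ℝ) 1 := by norm_num
  have h11 : (1:ℝ) ∈ Set.Icc (0:ℝ) 1 := by norm_num
  obtain ⟨r, hr⟩ : ∃ r : ℝ → ℝ, r = fun t => ‖φ t‖ := ⟨_, rfl⟩
  have hrnn : ∀ t, 0 ≤ r t := by
    intro t
    simp only [hr]
    exact norm_nonneg _
  have habs : ∀ t ∈ Set.Icc (0:ℝ) 1, |r t ^ k - r 0 ^ k| ≤ D ^ k := by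
    intro t ht
    have h := abs_norm_sub_norm_le (φ t ^ k) (φ 0 ^ k)
    simp only [norm_pow] at h
    simp only [hr]
    exact h.trans (hl t ht)
  have h10 : |r 1 - r 0| ≤ D := root_le hk0 (hrnn 1) (hrnn 0) hD.le (habs 1 h11)
  have hDk : 0 < D ^ k := pow_pos hD k
  by_cases hcase : r 0 ^ k ≤ 2 * D ^ k
  · -- easy case : everything small
    have h2 := abs_le.1 (habs 1 h11)
    have h4 : (0:ℝ) ≤ 4 * D ^ k := by positivity
    have hpow : (2 * D) ^ k = 2 ^ k * D ^ k := by rw [mul_pow]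
    have h2k : (4:ℝ) ≤ 2 ^ k := by
      calc (4:ℝ) = 2 ^ 2 := by norm_num
      _ ≤ 2 ^ k := pow_le_pow_right₀ one_le_two hk
    have hr1 : r 1 ≤ 2 * D := by
      apply le_of_pow_le_pow_left₀ hk0 (by positivity)
      rw [hpow]; nlinarith
    have hr0 : r 0 ≤ 2 * D := by
      apply le_of_pow_le_pow_left₀ hk0 (by positivity)
      rw [hpow]; nlinarith
    have htri : ‖φ 1 - φ 0‖ ≤ r 1 + r 0 := by
      simpa [hr] using norm_sub_le (φ 1) (φ 0)
    nlinarith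
  · push_neg at hcase
    have hrt : ∀ t ∈ Set.Icc (0:ℝ) 1, D ^ k < r t ^ k := by
      intro t ht
      have := abs_le.1 (habs t ht)
      linarith [this.1]
    have hφ0 : ∀ t ∈ Set.Icc (0:ℝ) 1, φ t ≠ 0 := by
      intro t ht h0
      have h2 := hrt t ht
      simp only [hr, h0, norm_zero, zero_pow hk0] at h2
      linarith
    have hslit : ∀ t ∈ Set.Icc (0:ℝ) 1, φ t ∈ Complex.slitPlane := by
      intro t ht
      exact Complex.mem_slitPlane_iff.2 (Or.inl (hH t ht (hφ0 t ht)))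
    obtain ⟨α, hα⟩ : ∃ α : ℝ → ℝ, α = fun t => Complex.arg (φ t) := ⟨_, rfl⟩
    have hαc : ContinuousOn α (Set.Icc 0 1) := by
      rw [hα]
      intro t ht
      exact (Complex.continuousAt_arg (hslit t ht)).comp_continuousWithinAt (hφ t ht)
    obtain ⟨d, hd⟩ : ∃ d : ℝ → ℝ, d = fun t => k * α t - k * α 0 := ⟨_, rfl⟩
    have hdc : ContinuousOn d (Set.Icc 0 1) := by
      rw [hd]
      exact (continuousOn_const.mul hαc).sub continuousOn_const
    have hd0 : d 0 = 0 := by simp [hd]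
    have hrep : ∀ t, φ t ^ k = (↑(r t ^ k) : ℂ) * Complex.exp (↑(k * α t : ℝ) * Complex.I) := by
      intro t
      simp only [hr, hα]
      conv_lhs => rw [← Complex.norm_mul_exp_arg_mul_I (φ t)]
      rw [mul_pow, ← Complex.exp_nat_mul]
      push_cast
      ring_nf
    have hrtpos : ∀ t ∈ Set.Icc (0:ℝ) 1, 0 < r t ^ k := fun t ht => hDk.trans (hrt t ht)
    have hcos : ∀ t ∈ Set.Icc (0:ℝ) 1, 0 < Real.cos (d t) := by
      intro t ht
      have h1 : Complex.normSq (φ t ^ k - φ 0 ^ k) ≤ (D ^ k) ^ 2 := by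
        rw [← Complex.sq_norm]
        exact pow_le_pow_left₀ (norm_nonneg _) (hl t ht) 2
      have h2 : Complex.normSq (φ t ^ k - φ 0 ^ k)
          = (r t ^ k) ^ 2 + (r 0 ^ k) ^ 2
            - 2 * ((φ t ^ k) * (starRingEnd ℂ) (φ 0 ^ k)).re := by
        rw [Complex.normSq_sub, ← Complex.sq_norm, ← Complex.sq_norm]
        simp [hr, map_pow]
      have h3 : ((φ t ^ k) * (starRingEnd ℂ) (φ 0 ^ k)).re
          = r t ^ k * r 0 ^ k * Real.cos (d t) := by
        rw [hrep t, hrep 0, conj_coe_exp, mul_mul_mul_comm, ← Complex.ofReal_mul,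
          ← Complex.exp_add]
        have harg : ((↑(↑k * α t : ℝ) : ℂ) * Complex.I + (↑(-(↑k * α 0) : ℝ) : ℂ) * Complex.I)
            = ((d t : ℝ) : ℂ) * Complex.I := by
          simp only [hd]
          push_cast
          ring
        rw [harg, Complex.re_ofReal_mul, Complex.exp_ofReal_mul_I_re]
      have hpos : 0 < r t ^ k * r 0 ^ k := mul_pos (hrtpos t ht) (hrtpos 0 h01)
      nlinarith [hrt 0 h01, hrt t ht]
    have hd1 : |d 1| < Real.pi / 2 := by
      by_contra hcon
      push_neg at hcon
      rcases le_abs'.1 hcon with hneg | hpos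
      · have hmem : -(Real.pi/2) ∈ Set.Icc (d 1) (d 0) := by
          constructor
          · linarith
          · rw [hd0]; linarith [Real.pi_pos]
        obtain ⟨s, hs, hds⟩ := intermediate_value_Icc' (by norm_num : (0:ℝ) ≤ 1) hdc hmem
        have := hcos s hs
        rw [hds, Real.cos_neg, Real.cos_pi_div_two] at this
        exact lt_irrefl 0 this
      · have hmem : Real.pi/2 ∈ Set.Icc (d 0) (d 1) := by
          constructor
          · rw [hd0]; linarith [Real.pi_pos]
          · linarith
        obtain ⟨s, hs, hds⟩ := intermediate_value_Icc (by norm_num : (0:ℝ) ≤ 1) hdc hmem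
        have := hcos s hs
        rw [hds, Real.cos_pi_div_two] at this
        exact lt_irrefl 0 this
    -- bound on |sin (d 1)|
    have hsin : r 1 ^ k * |Real.sin (d 1)| ≤ D ^ k := by
      have hfac : Complex.exp (((-(↑k * α 0) : ℝ) : ℂ) * Complex.I) * (φ 1 ^ k - φ 0 ^ k)
          = (↑(r 1 ^ k) : ℂ) * Complex.exp ((↑(d 1) : ℂ) * Complex.I) - (↑(r 0 ^ k) : ℂ) := by
        rw [hrep 1, hrep 0, mul_sub, exp_shift, exp_shift]
        have e1 : (↑k * α 1 + -(↑k * α 0) : ℝ) = d 1 := by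
          simp only [hd]
          ring
        have e2 : (↑k * α 0 + -(↑k * α 0) : ℝ) = 0 := by ring
        rw [e1, e2]
        norm_num
      have him : ((↑(r 1 ^ k) : ℂ) * Complex.exp ((↑(d 1) : ℂ) * Complex.I) - (↑(r 0 ^ k) : ℂ)).im
          = r 1 ^ k * Real.sin (d 1) := by
        simp [Complex.exp_ofReal_mul_I_im, Complex.exp_ofReal_mul_I_re, ← Complex.ofReal_pow]
      calc r 1 ^ k * |Real.sin (d 1)|
          = |((↑(r 1 ^ k) : ℂ) * Complex.exp ((↑(d 1) : ℂ) * Complex.I) - (↑(r 0 ^ k) : ℂ)).im| := by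
            rw [him, abs_mul, abs_of_nonneg (le_of_lt (hrtpos 1 h11))]
        _ ≤ ‖(↑(r 1 ^ k) : ℂ) * Complex.exp ((↑(d 1) : ℂ) * Complex.I) - (↑(r 0 ^ k) : ℂ)‖ :=
            Complex.abs_im_le_norm _
        _ = ‖φ 1 ^ k - φ 0 ^ k‖ := by
            rw [← hfac, norm_mul, Complex.norm_exp_ofReal_mul_I, one_mul]
        _ ≤ D ^ k := hl 1 h11
    have hr1D : D ≤ r 1 := le_of_pow_le_pow_left₀ hk0 (hrnn 1) (hrt 1 h11).le
    -- r 1 * |sin (d 1)| ≤ D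
    have hrs : r 1 * |Real.sin (d 1)| ≤ D := by
      apply le_of_pow_le_pow_left₀ hk0 hD.le
      have hs1 : |Real.sin (d 1)| ≤ 1 := abs_le.2 ⟨Real.neg_one_le_sin _, Real.sin_le_one _⟩
      calc (r 1 * |Real.sin (d 1)|) ^ k = r 1 ^ k * |Real.sin (d 1)| ^ k := mul_pow _ _ _
        _ ≤ r 1 ^ k * |Real.sin (d 1)| := by
            apply mul_le_mul_of_nonneg_left _ (hrtpos 1 h11).le
            exact pow_le_of_le_one (abs_nonneg _) hs1 hk0
        _ ≤ D ^ k := hsin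
    -- |d 1| ≤ π/2 * |sin (d 1)|
    obtain ⟨hd1a, hd1b⟩ := abs_lt.1 hd1
    have habs_sin : |Real.sin (d 1)| = Real.sin |d 1| := by
      rcases le_or_gt 0 (d 1) with h | h
      · rw [abs_of_nonneg h, abs_of_nonneg]
        apply Real.sin_nonneg_of_nonneg_of_le_pi h
        linarith [Real.pi_pos]
      · rw [abs_of_neg h, Real.sin_neg, abs_of_nonpos]
        apply Real.sin_nonpos_of_nonpos_of_neg_pi_le h.le
        linarith [Real.pi_pos]
    have hd1sin : |d 1| ≤ Real.pi / 2 * Real.sin |d 1| := by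
      have h2 := Real.mul_le_sin (abs_nonneg (d 1)) hd1.le
      have h3 := mul_le_mul_of_nonneg_left h2 (by positivity : (0:ℝ) ≤ Real.pi / 2)
      calc |d 1| = Real.pi / 2 * (2 / Real.pi * |d 1|) := by
            rw [← mul_assoc]
            rw [show Real.pi / 2 * (2 / Real.pi) = 1 by
              field_simp]
            rw [one_mul]
        _ ≤ Real.pi / 2 * Real.sin |d 1| := h3
    -- main estimate
    have hsplit : ‖φ 1 - φ 0‖
        ≤ r 1 * ‖Complex.exp (↑(α 1) * Complex.I) - Complex.exp (↑(α 0) * Complex.I)‖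
          + |r 1 - r 0| := by
      have hsp : φ 1 - φ 0
          = (↑(r 1) : ℂ) * (Complex.exp (↑(α 1) * Complex.I) - Complex.exp (↑(α 0) * Complex.I))
            + (↑(r 1 - r 0) : ℂ) * Complex.exp (↑(α 0) * Complex.I) := by
        simp only [hr, hα]
        conv_lhs => rw [← Complex.norm_mul_exp_arg_mul_I (φ 1), ← Complex.norm_mul_exp_arg_mul_I (φ 0)]
        push_cast
        ring_nf
      rw [hsp]
      refine (norm_add_le _ _).trans ?_
      rw [norm_mul, norm_mul, Complex.norm_exp_ofReal_mul_I, mul_one,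
        Complex.norm_real, Complex.norm_real, Real.norm_eq_abs, Real.norm_eq_abs, abs_of_nonneg (hrnn 1)]
    have hchord : ‖Complex.exp (↑(α 1) * Complex.I) - Complex.exp (↑(α 0) * Complex.I)‖
        ≤ |α 1 - α 0| := chord_le (α 1) (α 0)
    have hangle : (k:ℝ) * |α 1 - α 0| = |d 1| := by
      simp only [hd]
      rw [show (k:ℝ) * α 1 - k * α 0 = k * (α 1 - α 0) by ring, abs_mul, Nat.abs_cast]
    have hrpos : 0 < r 1 := lt_of_lt_of_le hD hr1D
    have hstep2 : r 1 * |α 1 - α 0| ≤ Real.pi / (2 * k) * D := by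
      have e1 : r 1 * |α 1 - α 0| = r 1 * |d 1| / k := by
        rw [← hangle]; field_simp
      rw [e1]
      have e2 : r 1 * |d 1| ≤ Real.pi / 2 * (r 1 * |Real.sin (d 1)|) := by
        calc r 1 * |d 1| ≤ r 1 * (Real.pi / 2 * Real.sin |d 1|) :=
              mul_le_mul_of_nonneg_left hd1sin (hrnn 1)
          _ = Real.pi / 2 * (r 1 * |Real.sin (d 1)|) := by rw [habs_sin]; ring
      have e3 : r 1 * |d 1| ≤ Real.pi / 2 * D := by
        calc r 1 * |d 1| ≤ Real.pi / 2 * (r 1 * |Real.sin (d 1)|) := e2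
          _ ≤ Real.pi / 2 * D := by
              apply mul_le_mul_of_nonneg_left hrs
              positivity
      rw [div_le_iff₀ (by positivity : (0:ℝ) < (k:ℝ))]
      calc r 1 * |d 1| ≤ Real.pi / 2 * D := e3
        _ = Real.pi / (2 * k) * D * k := by field_simp
    have hπ : Real.pi ≤ 4 := by linarith [Real.pi_le_four]
    have hfinal : Real.pi / (2 * k) * D + D ≤ 2 * k * D := by
      have hkpos : (0:ℝ) < (k:ℝ) := by linarith
      have h1 : Real.pi / (2 * k) ≤ 1 := by
        rw [div_le_one (by positivity)]
        nlinarith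
      nlinarith
    calc ‖φ 1 - φ 0‖
        ≤ r 1 * ‖Complex.exp (↑(α 1) * Complex.I)
            - Complex.exp (↑(α 0) * Complex.I)‖ + |r 1 - r 0| := hsplit
      _ ≤ r 1 * |α 1 - α 0| + D := by
          have := mul_le_mul_of_nonneg_left hchord (hrnn 1)
          linarith
      _ ≤ Real.pi / (2 * k) * D + D := by linarith
      _ ≤ 2 * k * D := hfinal

theorem stmt8 {n : ℕ} (R : ℝ) (hR : 0 < R) (k : ℕ) (hk : 1 ≤ k)
    (g : EuclideanSpace ℝ (Fin n) → ℂ) (C₁ : ℝ)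
    (hcont : ContinuousOn g (ball 0 R))
    (hre : ∀ x ∈ ball (0 : EuclideanSpace ℝ (Fin n)) R, 0 ≤ (g x).re)
    (heq : ∀ x ∈ ball (0 : EuclideanSpace ℝ (Fin n)) R, (g x).re = 0 → x = 0)
    (hg0 : g 0 = 0)
    (hlip : ∀ x ∈ ball (0 : EuclideanSpace ℝ (Fin n)) R,
      ∀ y ∈ ball (0 : EuclideanSpace ℝ (Fin n)) R,
        ‖(g y) ^ k - (g x) ^ k‖ ≤ C₁ * ‖y - x‖) :
    ∀ x ∈ ball (0 : EuclideanSpace ℝ (Fin n)) R,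
      ∀ y ∈ ball (0 : EuclideanSpace ℝ (Fin n)) R,
        ‖g y - g x‖ ≤
          (2 * k) * C₁ ^ ((1:ℝ) / k) * ‖y - x‖ ^ ((1:ℝ) / k) := by
  intro x hx y hy
  have hk0 : k ≠ 0 := by omega
  have hkinv : ((1:ℝ)/k) ≠ 0 := by positivity
  by_cases hxy : x = y
  · subst hxy
    simp only [sub_self, map_zero, norm_zero, Real.zero_rpow hkinv, mul_zero]
    exact le_refl 0
  · have hnorm : 0 < ‖y - x‖ := by
      rw [norm_pos_iff]
      exact sub_ne_zero.2 (Ne.symm hxy)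
    have hC₁ : 0 ≤ C₁ := by
      by_contra hneg
      push_neg at hneg
      have h := hlip x hx y hy
      nlinarith [norm_nonneg ((g y) ^ k - (g x) ^ k)]
    by_cases hC0 : C₁ = 0
    · subst hC0
      have hzero : ∀ z ∈ ball (0 : EuclideanSpace ℝ (Fin n)) R, g z = 0 := by
        intro z hz
        have h := hlip 0 (mem_ball_self hR) z hz
        rw [hg0] at h
        simp only [zero_mul, zero_pow hk0, sub_zero] at h
        have h2 : ‖g z ^ k‖ = 0 := le_antisymm h (norm_nonneg _)
        have h3 := norm_eq_zero.1 h2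
        exact pow_eq_zero_iff hk0 |>.1 h3
      rw [hzero y hy, hzero x hx]
      simp only [sub_self, norm_zero, Real.zero_rpow hkinv, mul_zero, zero_mul]
      exact le_refl 0
    · have hC₁pos : 0 < C₁ := lt_of_le_of_ne hC₁ (Ne.symm hC0)
      rcases eq_or_lt_of_le hk with hk1 | hk2
      · -- k = 1
        have hk1' : k = 1 := hk1.symm
        subst hk1'
        have h := hlip x hx y hy
        simp only [pow_one] at h
        simp only [Nat.cast_one, div_one, Real.rpow_one]
        nlinarith [norm_nonneg (g y - g x)]
      · -- 2 ≤ k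
        have hk2' : 2 ≤ k := hk2
        set D : ℝ := (C₁ * ‖y - x‖) ^ ((1:ℝ)/k) with hDdef
        have hDpos : 0 < D := Real.rpow_pos_of_pos (by positivity) _
        have hkne : (k:ℝ) ≠ 0 := by exact_mod_cast hk0
        have hDk : D ^ k = C₁ * ‖y - x‖ := by
          rw [hDdef, ← Real.rpow_natCast ((C₁ * ‖y - x‖) ^ ((1:ℝ)/k)) k,
            ← Real.rpow_mul (by positivity), one_div, inv_mul_cancel₀ hkne, Real.rpow_one]
        set φ : ℝ → ℂ := fun t => g (x + t • (y - x)) with hφdef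
        have hmem : ∀ t ∈ Set.Icc (0:ℝ) 1,
            x + t • (y - x) ∈ ball (0 : EuclideanSpace ℝ (Fin n)) R := by
          intro t ht
          have h := (convex_ball (0 : EuclideanSpace ℝ (Fin n)) R) hx hy
            (by linarith [ht.2] : (0:ℝ) ≤ 1 - t) ht.1 (by ring)
          convert h using 1
          module
        have hφc : ContinuousOn φ (Set.Icc 0 1) := by
          apply hcont.comp
          · exact (continuous_const.add (continuous_id.smul continuous_const)).continuousOn
          · intro t ht
            exact hmem t ht
        have hHφ : ∀ t ∈ Set.Icc (0:ℝ) 1, φ t ≠ 0 → 0 < (φ t).re := by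
          intro t ht hne
          rcases lt_or_eq_of_le (hre _ (hmem t ht)) with h | h
          · exact h
          · exfalso
            apply hne
            have hp := heq _ (hmem t ht) h.symm
            show g (x + t • (y - x)) = 0
            rw [hp, hg0]
        have hlφ : ∀ t ∈ Set.Icc (0:ℝ) 1, ‖φ t ^ k - φ 0 ^ k‖ ≤ D ^ k := by
          intro t ht
          have h := hlip (x + (0:ℝ) • (y - x)) (hmem 0 ⟨le_refl 0, zero_le_one⟩)
            (x + t • (y - x)) (hmem t ht)
          have hnorm2 : ‖(x + t • (y - x)) - (x + (0:ℝ) • (y - x))‖ = t * ‖y - x‖ := by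
            rw [show (x + t • (y - x)) - (x + (0:ℝ) • (y - x)) = t • (y - x) by module]
            rw [norm_smul, Real.norm_eq_abs, abs_of_nonneg ht.1]
          rw [hnorm2] at h
          rw [hDk]
          calc ‖φ t ^ k - φ 0 ^ k‖ ≤ C₁ * (t * ‖y - x‖) := h
            _ ≤ C₁ * ‖y - x‖ := by
                linarith [mul_nonneg (mul_nonneg hC₁pos.le (norm_nonneg (y - x)))
                  (by linarith [ht.2] : (0:ℝ) ≤ 1 - t)]
        have hkey := key hk2' hDpos φ hφc hHφ hlφ
        have hφ1 : φ 1 = g y := by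
          show g (x + (1:ℝ) • (y - x)) = g y
          congr 1
          module
        have hφ0 : φ 0 = g x := by
          show g (x + (0:ℝ) • (y - x)) = g x
          congr 1
          module
        rw [hφ1, hφ0] at hkey
        calc ‖g y - g x‖ ≤ 2 * k * D := hkey
          _ = (2 * k) * C₁ ^ ((1:ℝ)/k) * ‖y - x‖ ^ ((1:ℝ)/k) := by
              rw [hDdef, Real.mul_rpow hC₁ (norm_nonneg _)]
              ring
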